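/- arXiv:2311.04312 — 3 statements merged into one kernel-verified Lean document; each statement's English description precedes it below -/
import Mathlib

section
/- Let ω : {(s,t) : 0 ≤ s ≤ t ≤ T} → [0,∞) be a control function, i.e. ω is continuous, vanishes on the diagonal, and is superadditive (ω(s,u) + ω(u,t) ≤ ω(s,t) for s ≤ u ≤ t). Then for any 0 < h ≤ T, the integral ∫₀^{T-h} ω(t, t+h) dt is at most ω(0,T) · h. -/
open MeasureTheory

set_option maxHeartbeats 1000000 in
/-- For a control function `ω` on `[0,T]` (continuous on the simplex,
vanishing on the diagonal, nonnegative and superadditive), and `0 < h ≤ T`,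
the integral `∫₀^{T-h} ω(t, t+h) dt` is at most `ω(0,T) · h`. -/
theorem control_integral_bound (T h : ℝ) (ω : ℝ → ℝ → ℝ)
    (hcont : ContinuousOn (fun p : ℝ × ℝ => ω p.1 p.2)
      {p : ℝ × ℝ | 0 ≤ p.1 ∧ p.1 ≤ p.2 ∧ p.2 ≤ T})
    (hdiag : ∀ t, 0 ≤ t → t ≤ T → ω t t = 0)
    (hnonneg : ∀ s t, 0 ≤ s → s ≤ t → t ≤ T → 0 ≤ ω s t)
    (hsuper : ∀ s u t, 0 ≤ s → s ≤ u → u ≤ t → t ≤ T → ω s u + ω u t ≤ ω s t)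
    (hh : 0 < h) (hhT : h ≤ T) :
    ∫ t in (0:ℝ)..(T - h), ω t (t + h) ≤ ω 0 T * h := by
  have hT0 : (0:ℝ) ≤ T - h := by linarith
  have hTpos : (0:ℝ) ≤ T := by linarith
  obtain ⟨m, hmh⟩ : ∃ m : ℕ, T ≤ (m : ℝ) * h := by
    refine ⟨⌈T / h⌉₊, ?_⟩
    have h1 : T / h ≤ ((⌈T / h⌉₊ : ℕ) : ℝ) := Nat.le_ceil (T / h)
    have := mul_le_mul_of_nonneg_right h1 hh.le
    rwa [div_mul_cancel₀ _ hh.ne'] at this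
  -- the shifted block functions
  set g : ℕ → ℝ → ℝ :=
    fun k s => ω (min (s + (k : ℝ) * h) T) (min (s + ((k : ℝ) + 1) * h) T) with hg
  -- continuity of the integrand on [0, T-h]
  have cf : ContinuousOn (fun t : ℝ => ω t (t + h)) (Set.Icc 0 (T - h)) := by
    show ContinuousOn ((fun p : ℝ × ℝ => ω p.1 p.2) ∘ fun t : ℝ => (t, t + h)) (Set.Icc 0 (T - h))
    apply hcont.comp (Continuous.continuousOn
      (continuous_id.prodMk (continuous_id.add continuous_const)))
    intro t ht
    simp only [Set.mem_Icc] at ht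
    exact ⟨ht.1, by simp only [Pi.add_apply, id_eq]; linarith, by simp only [Pi.add_apply, id_eq]; linarith [ht.2]⟩
  -- continuity of each g k on [0, h]
  have cg : ∀ k : ℕ, ContinuousOn (g k) (Set.Icc 0 h) := by
    intro k
    show ContinuousOn ((fun p : ℝ × ℝ => ω p.1 p.2) ∘
      fun s : ℝ => (min (s + (k : ℝ) * h) T, min (s + ((k : ℝ) + 1) * h) T)) (Set.Icc 0 h)
    apply hcont.comp (Continuous.continuousOn
      (((continuous_id.add continuous_const).min continuous_const).prodMk
        ((continuous_id.add continuous_const).min continuous_const)))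
    intro s hs
    simp only [Set.mem_Icc] at hs
    have hk0 : (0:ℝ) ≤ (k : ℝ) * h := by positivity
    have hkh : ((k : ℝ) + 1) * h = (k : ℝ) * h + h := by ring
    refine ⟨le_min (by simp only [Pi.add_apply, id_eq]; linarith) hTpos,
      min_le_min (by simp only [Pi.add_apply, id_eq]; linarith) le_rfl, min_le_right _ _⟩
  -- nonnegativity of g k
  have gnn : ∀ k : ℕ, ∀ s, 0 ≤ s → 0 ≤ g k s := by
    intro k s hs0
    have hk0 : (0:ℝ) ≤ (k : ℝ) * h := by positivity
    have hkh : ((k : ℝ) + 1) * h = (k : ℝ) * h + h := by ring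
    exact hnonneg _ _ (le_min (by linarith) hTpos)
      (min_le_min (by linarith) le_rfl) (min_le_right _ _)
  -- integrability of g k on subintervals of [0,h]
  have gint : ∀ k : ℕ, ∀ a b : ℝ, 0 ≤ a → a ≤ b → b ≤ h →
      IntervalIntegrable (g k) volume a b := by
    intro k a b ha hab hb
    exact ((cg k).mono (Set.Icc_subset_Icc ha hb)).intervalIntegrable_of_Icc hab
  -- step 1 : split the integral into blocks
  set a : ℕ → ℝ := fun k => min ((k : ℝ) * h) (T - h) with ha
  have haint : ∀ k : ℕ, k < m → IntervalIntegrable (fun t : ℝ => ω t (t + h)) volume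
      (a k) (a (k + 1)) := by
    intro k _
    have h1 : a k ≤ a (k + 1) := by
      apply min_le_min _ le_rfl
      have hc : ((k + 1 : ℕ) : ℝ) * h = (k : ℝ) * h + h := by push_cast; ring
      linarith
    have h2 : (0:ℝ) ≤ a k := le_min (by positivity) hT0
    have h3 : a (k+1) ≤ T - h := min_le_right _ _
    exact ((cf.mono (Set.Icc_subset_Icc h2 h3)).intervalIntegrable_of_Icc h1)
  have hsplit : ∫ t in (0:ℝ)..(T - h), ω t (t + h)
      = ∑ k ∈ Finset.range m, ∫ t in (a k)..(a (k + 1)), ω t (t + h) := by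
    rw [intervalIntegral.sum_integral_adjacent_intervals haint]
    have e0 : a 0 = 0 := by simp [ha, min_eq_left hT0]
    have em : a m = T - h := by
      apply min_eq_right
      linarith
    rw [e0, em]
  -- step 2 : bound each block integral by the integral of g k over [0,h]
  have hterm : ∀ k : ℕ, (∫ t in (a k)..(a (k + 1)), ω t (t + h)) ≤ ∫ s in (0:ℝ)..h, g k s := by
    intro k
    have hkh : ((k : ℝ) + 1) * h = (k : ℝ) * h + h := by ring
    have hcast : ((k + 1 : ℕ) : ℝ) = (k : ℝ) + 1 := by push_cast; ring
    by_cases hk : (k : ℝ) * h ≤ T - h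
    · set u : ℝ := min h (T - h - (k : ℝ) * h) with hu
      have hu0 : 0 ≤ u := le_min hh.le (by linarith)
      have huh : u ≤ h := min_le_left _ _
      have huT : u ≤ T - h - (k:ℝ) * h := min_le_right _ _
      have e1 : a k = (k : ℝ) * h := min_eq_left hk
      have e2 : a (k + 1) = (k : ℝ) * h + u := by
        rcases le_total (((k : ℝ) + 1) * h) (T - h) with hc | hc
        · rw [ha]; simp only [hcast]
          rw [min_eq_left hc, hu, min_eq_left (by linarith)]; ring
        · rw [ha]; simp only [hcast]
          rw [min_eq_right hc, hu, min_eq_right (by linarith)]; ring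
      rw [e1, e2]
      have e3 : ∫ t in ((k:ℝ) * h)..((k:ℝ) * h + u), ω t (t + h)
          = ∫ s in (0:ℝ)..u, ω (s + (k:ℝ) * h) (s + (k:ℝ) * h + h) := by
        have := intervalIntegral.integral_comp_add_right (a := (0:ℝ)) (b := u)
          (fun t : ℝ => ω t (t + h)) ((k:ℝ) * h)
        rw [zero_add, add_comm u ((k:ℝ)*h)] at this
        rw [← this]
      have e4 : ∫ s in (0:ℝ)..u, ω (s + (k:ℝ) * h) (s + (k:ℝ) * h + h)
          = ∫ s in (0:ℝ)..u, g k s := by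
        apply intervalIntegral.integral_congr
        intro s hs
        rw [Set.uIcc_of_le hu0, Set.mem_Icc] at hs
        have h1 : s + (k:ℝ) * h ≤ T - h := by linarith [hs.2]
        have h2 : min (s + (k:ℝ) * h) T = s + (k:ℝ) * h := min_eq_left (by linarith)
        have h3 : min (s + ((k:ℝ) + 1) * h) T = s + ((k:ℝ) + 1) * h :=
          min_eq_left (by linarith)
        simp only [hg, h2, h3]
        congr 1
        linarith
      rw [e3, e4]
      have hadj : (∫ s in (0:ℝ)..u, g k s) + ∫ s in u..h, g k s = ∫ s in (0:ℝ)..h, g k s :=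
        intervalIntegral.integral_add_adjacent_intervals (gint k 0 u le_rfl hu0 (by linarith))
          (gint k u h hu0 huh le_rfl)
      have hpos : 0 ≤ ∫ s in u..h, g k s :=
        intervalIntegral.integral_nonneg huh (fun s hs => gnn k s (by linarith [hs.1]))
      linarith
    · have e1 : a k = T - h := min_eq_right (by linarith)
      have e2 : a (k + 1) = T - h := by
        rw [ha]; simp only [hcast]
        exact min_eq_right (by nlinarith)
      rw [e1, e2, intervalIntegral.integral_same]
      exact intervalIntegral.integral_nonneg hh.le (fun s hs => gnn k s hs.1)
  -- step 3 : pointwise bound on the sum of g k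
  have chain : ∀ s ∈ Set.Icc (0:ℝ) h, ∑ k ∈ Finset.range m, g k s ≤ ω 0 T := by
    intro s hs
    obtain ⟨hs0, hsh⟩ := hs
    have hsT : s ≤ T := by linarith
    have hx : ∀ n : ℕ, ∑ k ∈ Finset.range n, g k s ≤ ω s (min (s + (n : ℝ) * h) T) := by
      intro n
      induction n with
      | zero =>
        simp only [Finset.sum_range_zero, Nat.cast_zero, zero_mul, add_zero]
        rw [min_eq_left hsT, hdiag s hs0 hsT]
      | succ n ih =>
        rw [Finset.sum_range_succ]
        have hcast : ((n + 1 : ℕ) : ℝ) = (n : ℝ) + 1 := by push_cast; ring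
        rw [hcast]
        have hn0 : (0:ℝ) ≤ (n : ℝ) * h := by positivity
        have hnh : ((n : ℝ) + 1) * h = (n : ℝ) * h + h := by ring
        have hb1 : s ≤ min (s + (n:ℝ) * h) T := le_min (by linarith) hsT
        have hb2 : min (s + (n:ℝ) * h) T ≤ min (s + ((n:ℝ) + 1) * h) T :=
          min_le_min (by linarith) le_rfl
        have hb3 : min (s + ((n:ℝ) + 1) * h) T ≤ T := min_le_right _ _
        have key := hsuper s (min (s + (n:ℝ) * h) T) (min (s + ((n:ℝ) + 1) * h) T)
          hs0 hb1 hb2 hb3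
        -- g n s = ω (min (s + n h) T) (min (s + (n+1) h) T)
        have : g n s = ω (min (s + (n:ℝ) * h) T) (min (s + ((n:ℝ) + 1) * h) T) := rfl
        linarith
    have hm' := hx m
    have hmin : min (s + (m : ℝ) * h) T = T := min_eq_right (by linarith)
    rw [hmin] at hm'
    have hlast := hsuper 0 s T le_rfl hs0 hsT le_rfl
    have h0s := hnonneg 0 s le_rfl hs0 (by linarith)
    linarith
  -- put everything together
  calc ∫ t in (0:ℝ)..(T - h), ω t (t + h)
      = ∑ k ∈ Finset.range m, ∫ t in (a k)..(a (k + 1)), ω t (t + h) := hsplit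
    _ ≤ ∑ k ∈ Finset.range m, ∫ s in (0:ℝ)..h, g k s :=
        Finset.sum_le_sum fun k _ => hterm k
    _ = ∫ s in (0:ℝ)..h, ∑ k ∈ Finset.range m, g k s := by
        rw [intervalIntegral.integral_finset_sum]
        intro k _
        exact gint k 0 h le_rfl hh.le le_rfl
    _ ≤ ∫ _ in (0:ℝ)..h, ω 0 T := by
        have hsint : IntervalIntegrable (fun s => ∑ k ∈ Finset.range m, g k s) volume 0 h := by
          have := IntervalIntegrable.sum (μ := volume) (a := (0:ℝ)) (b := h) (Finset.range m)
            (f := g) (fun k _ => gint k 0 h le_rfl hh.le le_rfl)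
          have eq : (∑ k ∈ Finset.range m, g k) = fun s => ∑ k ∈ Finset.range m, g k s :=
            funext fun s => by simp
          exact eq ▸ this
        exact intervalIntegral.integral_mono_on hh.le hsint intervalIntegrable_const chain
    _ = ω 0 T * h := by
        rw [intervalIntegral.integral_const]
        simp [mul_comm]
end

section
/- Let 1 ≤ q ≤ p < ∞ and θ = q/p ∈ (0,1]. For any function f : [s,t] → ℝ^d of finite q-variation, the p-variation of f satisfies the interpolation bound ‖f‖_{p-var;[s,t]} ≤ ‖f‖_{q-var;[s,t]}^θ · (2 sup_{u∈[s,t]} |f(u) - f(s)|)^{1-θ}. -/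
open scoped ENNReal

/-- The `p`-variation of `f` on `[s,t]`: supremum over all finite partitions
`s = u 0 ≤ u 1 ≤ ... ≤ u n = t` of `(∑ |f(u_{i+1}) - f(u_i)|^p)^{1/p}`. -/
noncomputable def pVar {E : Type*} [NormedAddCommGroup E] (p : ℝ) (f : ℝ → E)
    (s t : ℝ) : ℝ≥0∞ :=
  ⨆ (n : ℕ) (u : {u : Fin (n + 1) → ℝ // Monotone u ∧ u 0 = s ∧ u (Fin.last n) = t}),
    (∑ i : Fin n, ((‖f (u.1 i.succ) - f (u.1 i.castSucc)‖₊ : ℝ≥0∞)) ^ p) ^ (1 / p)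

/-- Interpolation bound for variation norms: for `1 ≤ q ≤ p` and
`θ = q/p`, any `f : [s,t] → ℝ^d` of finite `q`-variation satisfies
`‖f‖_{p-var} ≤ ‖f‖_{q-var}^θ · (2 sup_{u∈[s,t]} |f(u)-f(s)|)^{1-θ}`. -/
theorem variation_interpolation (d : ℕ) (p q : ℝ) (hq : 1 ≤ q) (hqp : q ≤ p)
    (f : ℝ → EuclideanSpace ℝ (Fin d)) (s t : ℝ) (hst : s ≤ t)
    (hfin : pVar q f s t ≠ ⊤) :
    pVar p f s t ≤
      (pVar q f s t) ^ (q / p) *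
        ((2 : ℝ≥0∞) * ⨆ (u : ℝ) (_ : u ∈ Set.Icc s t),
          ((‖f u - f s‖₊ : ℝ≥0∞))) ^ (1 - q / p) := by
  have hq0 : (0:ℝ) < q := lt_of_lt_of_le one_pos hq
  have hp0 : (0:ℝ) < p := hq0.trans_le hqp
  set S : ℝ≥0∞ := ⨆ (u : ℝ) (_ : u ∈ Set.Icc s t), ((‖f u - f s‖₊ : ℝ≥0∞)) with hS
  set V : ℝ≥0∞ := pVar q f s t with hV
  rw [pVar]
  refine iSup_le fun n => iSup_le fun u => ?_
  set a : Fin n → ℝ≥0∞ := fun i => (‖f (u.1 i.succ) - f (u.1 i.castSucc)‖₊ : ℝ≥0∞) with ha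
  have ha_top : ∀ i, a i ≠ ⊤ := fun i => ENNReal.coe_ne_top
  have hmem : ∀ j : Fin (n+1), u.1 j ∈ Set.Icc s t := fun j =>
    ⟨le_trans u.2.2.1.ge (u.2.1 (Fin.zero_le _)),
     le_trans (u.2.1 (Fin.le_last _)) u.2.2.2.le⟩
  have haM : ∀ i, a i ≤ 2 * S := by
    intro i
    have hb : (‖f (u.1 i.succ) - f s‖₊ : ℝ≥0∞) ≤ S :=
      le_iSup₂ (f := fun (v : ℝ) (_ : v ∈ Set.Icc s t) => ((‖f v - f s‖₊ : ℝ≥0∞)))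
        (u.1 i.succ) (hmem i.succ)
    have hc : (‖f (u.1 i.castSucc) - f s‖₊ : ℝ≥0∞) ≤ S :=
      le_iSup₂ (f := fun (v : ℝ) (_ : v ∈ Set.Icc s t) => ((‖f v - f s‖₊ : ℝ≥0∞)))
        (u.1 i.castSucc) (hmem i.castSucc)
    have heq : f (u.1 i.succ) - f (u.1 i.castSucc)
        = (f (u.1 i.succ) - f s) - (f (u.1 i.castSucc) - f s) := by abel
    calc a i = (‖(f (u.1 i.succ) - f s) - (f (u.1 i.castSucc) - f s)‖₊ : ℝ≥0∞) := by
          simp only [ha]; rw [heq]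
      _ ≤ (‖f (u.1 i.succ) - f s‖₊ : ℝ≥0∞) + (‖f (u.1 i.castSucc) - f s‖₊ : ℝ≥0∞) := by
          exact_mod_cast ENNReal.coe_le_coe.2 (nnnorm_sub_le _ _)
      _ ≤ S + S := add_le_add hb hc
      _ = 2 * S := (two_mul S).symm
  have key : ∀ i, a i ^ p ≤ a i ^ q * (2 * S) ^ (p - q) := by
    intro i
    rcases eq_or_ne (a i) 0 with h | h
    · rw [h, ENNReal.zero_rpow_of_pos hp0]; exact zero_le
    · have heq : a i ^ p = a i ^ q * a i ^ (p - q) := by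
        rw [← ENNReal.rpow_add _ _ h (ha_top i)]; ring_nf
      rw [heq]
      exact mul_le_mul_right (ENNReal.rpow_le_rpow (haM i) (sub_nonneg.2 hqp)) _
  have hsum : ∑ i, a i ^ p ≤ (∑ i, a i ^ q) * (2 * S) ^ (p - q) := by
    calc ∑ i, a i ^ p ≤ ∑ i, a i ^ q * (2 * S) ^ (p - q) :=
          Finset.sum_le_sum fun i _ => key i
      _ = (∑ i, a i ^ q) * (2 * S) ^ (p - q) := (Finset.sum_mul _ _ _).symm
  have hq_bound : ∑ i, a i ^ q ≤ V ^ q := by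
    have h1 : (∑ i, a i ^ q) ^ (1 / q) ≤ V := by
      rw [hV, pVar]
      exact le_iSup₂ (f := fun (n : ℕ)
        (u : {u : Fin (n + 1) → ℝ // Monotone u ∧ u 0 = s ∧ u (Fin.last n) = t}) =>
        (∑ i : Fin n, ((‖f (u.1 i.succ) - f (u.1 i.castSucc)‖₊ : ℝ≥0∞)) ^ q) ^ (1 / q)) n u
    calc ∑ i, a i ^ q = ((∑ i, a i ^ q) ^ (1 / q)) ^ q := by
          rw [← ENNReal.rpow_mul, one_div_mul_cancel hq0.ne', ENNReal.rpow_one]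
      _ ≤ V ^ q := ENNReal.rpow_le_rpow h1 hq0.le
  calc (∑ i, a i ^ p) ^ (1 / p) ≤ (V ^ q * (2 * S) ^ (p - q)) ^ (1 / p) :=
        ENNReal.rpow_le_rpow (hsum.trans (mul_le_mul_left hq_bound _)) (by positivity)
    _ = V ^ (q / p) * (2 * S) ^ (1 - q / p) := by
        rw [ENNReal.mul_rpow_of_nonneg _ _ (by positivity), ← ENNReal.rpow_mul,
          ← ENNReal.rpow_mul, show q * (1 / p) = q / p by ring,
          show (p - q) * (1 / p) = 1 - q / p by field_simp]
end

section
/- Let f : [0,T] → ℝ with |f(t)-f(s)| ≤ ω(s,t)^{1/p} |t-s|^{r-1/p} for a control function ω, where p ≥ 1, r ∈ (1/p, 1). Let D = {t_i} be a partition of [0,T] and f^D the piecewise-linear interpolation of f along D. Then there exists a control function ω^D with ω^D(0,T) ≤ ω(0,T) such that |f^D(t) - f^D(s)| ≤ 3^{1-1/p} ω^D(s,t)^{1/p} |t-s|^{r-1/p} for all 0 ≤ s ≤ t ≤ T. -/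
lemma pm3 {p : ℝ} (hp : 1 ≤ p) {x y z : ℝ} (hx : 0 ≤ x) (hy : 0 ≤ y) (hz : 0 ≤ z) :
    x ^ (1/p) + y ^ (1/p) + z ^ (1/p) ≤ (3:ℝ) ^ (1 - 1/p) * (x + y + z) ^ (1/p) := by
  have hp0 : (0:ℝ) < p := lt_of_lt_of_le one_pos hp
  have key := Real.arith_mean_le_rpow_mean (Finset.univ : Finset (Fin 3))
    (fun _ => (1:ℝ)/3) (![x, y, z] ^ (1/p) : Fin 3 → ℝ)
    (by intro i _; norm_num)
    (by norm_num [Fin.sum_univ_three])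
    (by intro i _; fin_cases i <;>
        simp [Real.rpow_nonneg, hx, hy, hz])
    hp
  simp only [Fin.sum_univ_three, Pi.pow_apply, Matrix.cons_val_zero, Matrix.cons_val_one,
    Matrix.head_cons, Matrix.cons_val_two, Matrix.tail_cons] at key
  have hre : ∀ u : ℝ, 0 ≤ u → (u ^ (1/p)) ^ p = u := by
    intro u hu
    rw [← Real.rpow_mul hu, one_div_mul_cancel hp0.ne', Real.rpow_one]
  rw [hre x hx, hre y hy, hre z hz] at key
  have h13 : (1:ℝ)/3 * x + 1/3 * y + 1/3 * z = 1/3 * (x+y+z) := by ring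
  rw [h13, Real.mul_rpow (by norm_num) (by linarith)] at key
  have h3 : (3:ℝ) ^ (1 - 1/p) = 3 * ((1:ℝ)/3) ^ (1/p) := by
    rw [Real.rpow_sub (by norm_num), Real.rpow_one]
    rw [one_div (3:ℝ), Real.inv_rpow (by norm_num)]
    rw [div_eq_mul_inv]
  rw [h3]
  nlinarith [key]

lemma keyineq {p r l d L X X' : ℝ} (hp : 1 ≤ p) (hrp : 1/p < r) (hr1 : r < 1)
    (hl0 : 0 < l) (hl1 : l ≤ 1) (hd : 0 ≤ d) (hL : l * d ≤ L)
    (hX : 0 ≤ X) (hXX' : X ≤ X') :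
    l * (X ^ (1/p) * d ^ (r - 1/p)) ≤ (l * X') ^ (1/p) * L ^ (r - 1/p) := by
  have hp0 : (0:ℝ) < p := lt_of_lt_of_le one_pos hp
  have h1p : 0 < 1/p := by positivity
  have he : 0 ≤ r - 1/p := by linarith
  have hX'0 : 0 ≤ X' := hX.trans hXX'
  calc l * (X ^ (1/p) * d ^ (r - 1/p))
      ≤ l ^ r * (X ^ (1/p) * d ^ (r - 1/p)) := by
        apply mul_le_mul_of_nonneg_right _ (by positivity)
        calc l = l ^ (1:ℝ) := (Real.rpow_one l).symm
        _ ≤ l ^ r := Real.rpow_le_rpow_of_exponent_ge hl0 hl1 (le_of_lt hr1)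
    _ = (l ^ (1/p) * X ^ (1/p)) * (l ^ (r - 1/p) * d ^ (r - 1/p)) := by
        rw [show (r : ℝ) = 1/p + (r - 1/p) by ring, Real.rpow_add hl0]
        ring_nf
    _ ≤ ((l * X') ^ (1/p)) * ((l * d) ^ (r - 1/p)) := by
        rw [Real.mul_rpow hl0.le hX'0, Real.mul_rpow hl0.le hd]
        apply mul_le_mul_of_nonneg_right _ (by positivity)
        exact mul_le_mul_of_nonneg_left (Real.rpow_le_rpow hX hXX' h1p.le) (by positivity)
    _ ≤ (l * X') ^ (1/p) * L ^ (r - 1/p) := by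
        apply mul_le_mul_of_nonneg_left _ (by positivity)
        exact Real.rpow_le_rpow (by positivity) hL he


/-- If `|f(t)-f(s)| ≤ ω(s,t)^{1/p} (t-s)^{r-1/p}` for a control `ω` on `[0,T]`,
and `f^D` is the piecewise-linear interpolation of `f` along a partition `D`, then there exists
a control `ω^D` with `ω^D(0,T) ≤ ω(0,T)` and
`|f^D(t)-f^D(s)| ≤ 3^{1-1/p} ω^D(s,t)^{1/p} (t-s)^{r-1/p}` for all `0 ≤ s ≤ t ≤ T`. -/
theorem piecewise_linear_control (T p r : ℝ) (N : ℕ) (hT : 0 < T) (hp : 1 ≤ p)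
    (hrp : 1 / p < r) (hr1 : r < 1)
    (ω : ℝ → ℝ → ℝ)
    (hcont : ContinuousOn (fun q : ℝ × ℝ => ω q.1 q.2)
      {q : ℝ × ℝ | 0 ≤ q.1 ∧ q.1 ≤ q.2 ∧ q.2 ≤ T})
    (hdiag : ∀ t, 0 ≤ t → t ≤ T → ω t t = 0)
    (hnonneg : ∀ s t, 0 ≤ s → s ≤ t → t ≤ T → 0 ≤ ω s t)
    (hsuper : ∀ s u t, 0 ≤ s → s ≤ u → u ≤ t → t ≤ T → ω s u + ω u t ≤ ω s t)
    (f : ℝ → ℝ)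
    (hf : ∀ s t, 0 ≤ s → s ≤ t → t ≤ T →
      |f t - f s| ≤ ω s t ^ (1 / p) * (t - s) ^ (r - 1 / p))
    (D : Fin (N + 1) → ℝ) (hD : StrictMono D) (hD0 : D 0 = 0) (hDT : D (Fin.last N) = T)
    (fD : ℝ → ℝ)
    (hfD : ∀ (i : Fin N), ∀ t ∈ Set.Icc (D i.castSucc) (D i.succ),
      fD t = f (D i.castSucc) +
        (t - D i.castSucc) / (D i.succ - D i.castSucc) *
          (f (D i.succ) - f (D i.castSucc))) :
    ∃ ωD : ℝ → ℝ → ℝ,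
      ContinuousOn (fun q : ℝ × ℝ => ωD q.1 q.2)
        {q : ℝ × ℝ | 0 ≤ q.1 ∧ q.1 ≤ q.2 ∧ q.2 ≤ T} ∧
      (∀ t, 0 ≤ t → t ≤ T → ωD t t = 0) ∧
      (∀ s t, 0 ≤ s → s ≤ t → t ≤ T → 0 ≤ ωD s t) ∧
      (∀ s u t, 0 ≤ s → s ≤ u → u ≤ t → t ≤ T → ωD s u + ωD u t ≤ ωD s t) ∧
      ωD 0 T ≤ ω 0 T ∧
      (∀ s t, 0 ≤ s → s ≤ t → t ≤ T →
        |fD t - fD s| ≤ 3 ^ (1 - 1 / p) * ωD s t ^ (1 / p) * (t - s) ^ (r - 1 / p)) := by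
  classical
  have hp0 : (0:ℝ) < p := lt_of_lt_of_le one_pos hp
  have h1p : 0 < 1/p := by positivity
  have he : 0 < r - 1/p := by linarith
  have hNpos : 0 < N := by
    rcases Nat.eq_zero_or_pos N with h | h
    · exfalso
      subst h
      rw [show Fin.last 0 = 0 from rfl, hD0] at hDT
      linarith
    · exact h
  -- the extended partition, indexed by ℕ
  set dd : ℕ → ℝ := fun n => D ⟨min n N, Nat.lt_succ_of_le (min_le_right n N)⟩ with hdd_def
  have hdd : ∀ n, (h : n ≤ N) → dd n = D ⟨n, Nat.lt_succ_of_le h⟩ := by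
    intro n h
    simp only [hdd_def]
    congr 1
    exact Fin.ext (by simp [min_eq_left h])
  have hdd0 : dd 0 = 0 := by
    rw [hdd 0 (Nat.zero_le N)]
    exact hD0
  have hddN : dd N = T := by
    rw [hdd N le_rfl]
    exact hDT
  have hmono : Monotone dd := by
    intro m n h
    exact hD.monotone (by simp only [Fin.mk_le_mk]; omega)
  have hlt : ∀ n, n < N → dd n < dd (n+1) := by
    intro n hn
    rw [hdd n hn.le, hdd (n+1) hn]
    exact hD (by simp only [Fin.mk_lt_mk]; omega)
  have hdd_nonneg : ∀ n, 0 ≤ dd n := by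
    intro n
    rw [← hdd0]; exact hmono (Nat.zero_le n)
  have hdd_leT : ∀ n, dd n ≤ T := by
    intro n
    rw [← hddN]
    simp only [hdd_def]
    exact hD.monotone (by simp only [Fin.mk_le_mk]; omega)
  -- hfD in terms of dd
  have hfD' : ∀ n, (hn : n < N) → ∀ x, dd n ≤ x → x ≤ dd (n+1) →
      fD x = f (dd n) + (x - dd n) / (dd (n+1) - dd n) * (f (dd (n+1)) - f (dd n)) := by
    intro n hn x hx1 hx2
    have h1 : D (⟨n, hn⟩ : Fin N).castSucc = dd n := by
      rw [hdd n hn.le]; congr 1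
    have h2 : D (⟨n, hn⟩ : Fin N).succ = dd (n+1) := by
      rw [hdd (n+1) hn]; congr 1
    have := hfD ⟨n, hn⟩ x (by rw [h1, h2]; exact ⟨hx1, hx2⟩)
    rw [h1, h2] at this
    exact this
  -- the interpolated "cumulative control" A
  set A : ℝ → ℝ := fun x => ∑ n ∈ Finset.range N,
      (ω 0 (dd (n+1)) - ω 0 (dd n)) *
        max 0 (min 1 ((x - dd n) / (dd (n+1) - dd n))) with hA_def
  have hc : ∀ n, n < N → 0 ≤ ω 0 (dd (n+1)) - ω 0 (dd n) := by
    intro n hn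
    have := hsuper 0 (dd n) (dd (n+1)) (le_refl 0) (hdd_nonneg n) (hlt n hn).le (hdd_leT (n+1))
    have h2 := hnonneg (dd n) (dd (n+1)) (hdd_nonneg n) (hlt n hn).le (hdd_leT (n+1))
    linarith
  have hAcont : Continuous A := by
    apply continuous_finset_sum
    intro n _
    exact continuous_const.mul (continuous_const.max (continuous_const.min
      ((continuous_id.sub continuous_const).div_const _)))
  have hAmono : Monotone A := by
    intro x y hxy
    apply Finset.sum_le_sum
    intro n hn
    rw [Finset.mem_range] at hn
    apply mul_le_mul_of_nonneg_left _ (hc n hn)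
    have hΔ : 0 < dd (n+1) - dd n := sub_pos.2 (hlt n hn)
    exact max_le_max le_rfl (min_le_min le_rfl
      ((div_le_div_iff_of_pos_right hΔ).2 (by linarith)))
  -- evaluation of A inside an interval
  have hAeval : ∀ n, n < N → ∀ x, dd n ≤ x → x ≤ dd (n+1) →
      A x = ω 0 (dd n) + (x - dd n) / (dd (n+1) - dd n) * (ω 0 (dd (n+1)) - ω 0 (dd n)) := by
    intro n hn x hx1 hx2
    have hsplit : A x = (∑ m ∈ Finset.range (n+1),
        (ω 0 (dd (m+1)) - ω 0 (dd m)) * max 0 (min 1 ((x - dd m) / (dd (m+1) - dd m))))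
        + ∑ m ∈ Finset.Ico (n+1) N,
        (ω 0 (dd (m+1)) - ω 0 (dd m)) * max 0 (min 1 ((x - dd m) / (dd (m+1) - dd m))) := by
      simp only [hA_def]
      exact (Finset.sum_range_add_sum_Ico _ hn).symm
    have hzero : ∀ m ∈ Finset.Ico (n+1) N,
        (ω 0 (dd (m+1)) - ω 0 (dd m)) * max 0 (min 1 ((x - dd m) / (dd (m+1) - dd m))) = 0 := by
      intro m hm
      rw [Finset.mem_Ico] at hm
      have hΔ : 0 < dd (m+1) - dd m := sub_pos.2 (hlt m hm.2)
      have hxm : x ≤ dd m := hx2.trans (hmono hm.1)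
      have hq : (x - dd m) / (dd (m+1) - dd m) ≤ 0 :=
        div_nonpos_of_nonpos_of_nonneg (by linarith) hΔ.le
      have : max 0 (min 1 ((x - dd m) / (dd (m+1) - dd m))) = 0 :=
        max_eq_left ((min_le_right _ _).trans hq)
      rw [this, mul_zero]
    have hone : ∀ m ∈ Finset.range n,
        (ω 0 (dd (m+1)) - ω 0 (dd m)) * max 0 (min 1 ((x - dd m) / (dd (m+1) - dd m)))
          = ω 0 (dd (m+1)) - ω 0 (dd m) := by
      intro m hm
      rw [Finset.mem_range] at hm
      have hΔ : 0 < dd (m+1) - dd m := sub_pos.2 (hlt m (hm.trans hn))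
      have hxm : dd (m+1) ≤ x := (hmono hm).trans hx1
      have hq : (1:ℝ) ≤ (x - dd m) / (dd (m+1) - dd m) := by
        rw [le_div_iff₀ hΔ]; linarith
      have : max 0 (min 1 ((x - dd m) / (dd (m+1) - dd m))) = 1 := by
        rw [min_eq_left hq, max_eq_right zero_le_one]
      rw [this, mul_one]
    have hmid : max 0 (min 1 ((x - dd n) / (dd (n+1) - dd n)))
        = (x - dd n) / (dd (n+1) - dd n) := by
      have hΔ : 0 < dd (n+1) - dd n := sub_pos.2 (hlt n hn)
      have h0 : 0 ≤ (x - dd n) / (dd (n+1) - dd n) := div_nonneg (by linarith) hΔ.le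
      have h1 : (x - dd n) / (dd (n+1) - dd n) ≤ 1 := by
        rw [div_le_one hΔ]; linarith
      rw [min_eq_right h1, max_eq_right h0]
    rw [hsplit, Finset.sum_eq_zero hzero, add_zero, Finset.sum_range_succ,
      Finset.sum_congr rfl hone, Finset.sum_range_sub (fun m => ω 0 (dd m)), hmid, hdd0,
      hdiag 0 le_rfl hT.le]
    ring
  have hAgrid : ∀ m, m ≤ N → A (dd m) = ω 0 (dd m) := by
    intro m hm
    rcases lt_or_eq_of_le hm with h | h
    · rw [hAeval m h (dd m) le_rfl (hlt m h).le, sub_self, zero_div, zero_mul, add_zero]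
    · subst h
      have hmm : m - 1 + 1 = m := by omega
      have h1 : dd (m-1) ≤ dd m := hmono (by omega)
      have h2 : dd m ≤ dd (m-1+1) := le_of_eq (by rw [hmm])
      have hev := hAeval (m-1) (by omega) (dd m) h1 h2
      rw [hmm] at hev
      have hΔ : dd m - dd (m-1) ≠ 0 := by
        have h3 := hlt (m-1) (by omega)
        rw [hmm] at h3
        linarith
      rw [hev, div_self hΔ, one_mul]
      ring
  -- single interval estimate
  have hbound : ∀ n, n < N → ∀ s t, dd n ≤ s → s ≤ t → t ≤ dd (n+1) → ∀ L, t - s ≤ L →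
      |fD t - fD s| ≤ (A t - A s) ^ (1/p) * L ^ (r - 1/p) := by
    intro n hn s t h1 h2 h3 L hL
    have hΔ : 0 < dd (n+1) - dd n := sub_pos.2 (hlt n hn)
    rcases eq_or_lt_of_le h2 with h | h
    · subst h
      simp only [sub_self, abs_zero, Real.zero_rpow h1p.ne', zero_mul, le_refl]
    · have hinc : fD t - fD s = (t - s) / (dd (n+1) - dd n) * (f (dd (n+1)) - f (dd n)) := by
        rw [hfD' n hn t (h1.trans h2) h3, hfD' n hn s h1 (h2.trans h3)]
        field_simp
        ring
      have hAst : A t - A s = (t - s) / (dd (n+1) - dd n) * (ω 0 (dd (n+1)) - ω 0 (dd n)) := by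
        rw [hAeval n hn t (h1.trans h2) h3, hAeval n hn s h1 (h2.trans h3)]
        field_simp
        ring
      have hωc : ω (dd n) (dd (n+1)) ≤ ω 0 (dd (n+1)) - ω 0 (dd n) := by
        have := hsuper 0 (dd n) (dd (n+1)) le_rfl (hdd_nonneg n) (hlt n hn).le (hdd_leT (n+1))
        linarith
      have hfab := hf (dd n) (dd (n+1)) (hdd_nonneg n) (hlt n hn).le (hdd_leT (n+1))
      have hl0 : 0 < (t - s) / (dd (n+1) - dd n) := div_pos (by linarith) hΔ
      have hl1 : (t - s) / (dd (n+1) - dd n) ≤ 1 := by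
        rw [div_le_one hΔ]; linarith
      calc |fD t - fD s| = (t - s) / (dd (n+1) - dd n) * |f (dd (n+1)) - f (dd n)| := by
            rw [hinc, abs_mul, abs_of_nonneg hl0.le]
        _ ≤ (t - s) / (dd (n+1) - dd n) *
            (ω (dd n) (dd (n+1)) ^ (1/p) * (dd (n+1) - dd n) ^ (r - 1/p)) := by
            apply mul_le_mul_of_nonneg_left _ hl0.le
            convert hfab using 3 <;> ring
        _ ≤ ((t - s) / (dd (n+1) - dd n) * (ω 0 (dd (n+1)) - ω 0 (dd n))) ^ (1/p)
            * L ^ (r - 1/p) := by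
            apply keyineq hp hrp hr1 hl0 hl1 hΔ.le _
              (hnonneg _ _ (hdd_nonneg n) (hlt n hn).le (hdd_leT (n+1))) hωc
            rw [div_mul_eq_mul_div, mul_div_assoc, div_self hΔ.ne', mul_one]
            exact hL
        _ = (A t - A s) ^ (1/p) * L ^ (r - 1/p) := by rw [hAst]
  have h3e : (1:ℝ) ≤ (3:ℝ) ^ (1 - 1/p) := by
    apply Real.one_le_rpow (by norm_num)
    rw [sub_nonneg, div_le_one hp0]
    exact hp
  refine ⟨fun s t => A t - A s, ?_, ?_, ?_, ?_, ?_, ?_⟩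
  · exact ((hAcont.comp continuous_snd).sub (hAcont.comp continuous_fst)).continuousOn
  · intro t _ _; exact sub_self _
  · intro s t _ hst _; exact sub_nonneg.2 (hAmono hst)
  · intro s u t _ _ _ _; exact le_of_eq (by ring)
  · show A T - A 0 ≤ ω 0 T
    have h0 : A 0 = 0 := by
      rw [← hdd0, hAgrid 0 (Nat.zero_le N), hdd0, hdiag 0 le_rfl hT.le]
    have hTT : A T = ω 0 T := by
      rw [← hddN, hAgrid N le_rfl, hddN]
    rw [h0, hTT, sub_zero]
  · intro s t hs hst htT
    show |fD t - fD s| ≤ 3 ^ (1 - 1/p) * (A t - A s) ^ (1/p) * (t - s) ^ (r - 1/p)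
    rcases eq_or_lt_of_le hst with h | hstlt
    · subst h
      simp only [sub_self, abs_zero, Real.zero_rpow h1p.ne', mul_zero, zero_mul, le_refl]
    -- locate s and t
    have hexs : ∃ n, n < N ∧ s ≤ dd (n+1) := by
      refine ⟨N-1, by omega, ?_⟩
      rw [show N-1+1 = N by omega, hddN]
      exact htT.trans' hst
    have hext : ∃ n, n < N ∧ t ≤ dd (n+1) := by
      refine ⟨N-1, by omega, ?_⟩
      rw [show N-1+1 = N by omega, hddN]
      exact htT
    set ns := Nat.find hexs with hns_def
    set nt := Nat.find hext with hnt_def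
    have hPs := Nat.find_spec hexs
    have hPt := Nat.find_spec hext
    have hns_le : ns ≤ nt := Nat.find_min' hexs ⟨hPt.1, hst.trans hPt.2⟩
    have hlbs : dd ns ≤ s := by
      rcases Nat.eq_zero_or_pos ns with h | h
      · rw [h, hdd0]; exact hs
      · have hmin := Nat.find_min hexs (show ns - 1 < ns by omega)
        push_neg at hmin
        have := hmin (by omega)
        rw [show ns - 1 + 1 = ns by omega] at this
        exact this.le
    have hlbt : dd nt ≤ t := by
      rcases Nat.eq_zero_or_pos nt with h | h
      · rw [h, hdd0]; linarith
      · have hmin := Nat.find_min hext (show nt - 1 < nt by omega)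
        push_neg at hmin
        have := hmin (by omega)
        rw [show nt - 1 + 1 = nt by omega] at this
        exact this.le
    rcases eq_or_lt_of_le hns_le with heq | hlt'
    · -- same interval
      have hb := hbound ns hPs.1 s t hlbs hst (heq ▸ hPt.2) (t - s) le_rfl
      have hXY : 0 ≤ (A t - A s) ^ (1/p) * (t - s) ^ (r - 1/p) :=
        mul_nonneg (Real.rpow_nonneg (sub_nonneg.2 (hAmono hst)) _)
          (Real.rpow_nonneg (by linarith) _)
      calc |fD t - fD s| ≤ (A t - A s) ^ (1/p) * (t - s) ^ (r - 1/p) := hb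
        _ = 1 * ((A t - A s) ^ (1/p) * (t - s) ^ (r - 1/p)) := (one_mul _).symm
        _ ≤ 3 ^ (1 - 1/p) * ((A t - A s) ^ (1/p) * (t - s) ^ (r - 1/p)) :=
            mul_le_mul_of_nonneg_right h3e hXY
        _ = 3 ^ (1 - 1/p) * (A t - A s) ^ (1/p) * (t - s) ^ (r - 1/p) := by ring
    · -- different intervals
      set a := dd (ns+1) with ha_def
      set b := dd nt with hb_def
      have hsa : s ≤ a := hPs.2
      have hab : a ≤ b := hmono hlt'
      have hbt : b ≤ t := hlbt
      have hat : a ≤ t := hab.trans hbt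
      have h0a : 0 ≤ a := hdd_nonneg _
      have h0b : 0 ≤ b := hdd_nonneg _
      have haT : a ≤ T := hdd_leT _
      have hbT : b ≤ T := hdd_leT _
      -- fD at grid points
      have hfa : fD a = f a := by
        rw [hfD' ns hPs.1 a (hlt ns hPs.1).le le_rfl]
        have hΔ : dd (ns+1) - dd ns ≠ 0 := (sub_pos.2 (hlt ns hPs.1)).ne'
        rw [ha_def, div_self hΔ]
        ring
      have hfb : fD b = f b := by
        rw [hfD' nt hPt.1 b le_rfl (hlt nt hPt.1).le, hb_def, sub_self, zero_div, zero_mul,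
          add_zero]
      -- the three pieces
      set x1 := A a - A s with hx1_def
      set x2 := A b - A a with hx2_def
      set x3 := A t - A b with hx3_def
      have hx1 : 0 ≤ x1 := sub_nonneg.2 (hAmono hsa)
      have hx2 : 0 ≤ x2 := sub_nonneg.2 (hAmono hab)
      have hx3 : 0 ≤ x3 := sub_nonneg.2 (hAmono hbt)
      have hT1 : |fD a - fD s| ≤ x1 ^ (1/p) * (t - s) ^ (r - 1/p) :=
        hbound ns hPs.1 s a hlbs hsa le_rfl (t - s) (by linarith)
      have hT3 : |fD t - fD b| ≤ x3 ^ (1/p) * (t - s) ^ (r - 1/p) :=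
        hbound nt hPt.1 b t le_rfl hbt hPt.2 (t - s) (by linarith)
      have hT2 : |f b - f a| ≤ x2 ^ (1/p) * (t - s) ^ (r - 1/p) := by
        have hAa : A a = ω 0 a := hAgrid (ns+1) (by omega)
        have hAb : A b = ω 0 b := hAgrid nt hPt.1.le
        have hω : ω a b ≤ x2 := by
          have := hsuper 0 a b le_rfl h0a hab hbT
          rw [hx2_def, hAa, hAb]
          linarith
        calc |f b - f a| ≤ ω a b ^ (1/p) * (b - a) ^ (r - 1/p) := hf a b h0a hab hbT
          _ ≤ x2 ^ (1/p) * (t - s) ^ (r - 1/p) := by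
              apply mul_le_mul
              · exact Real.rpow_le_rpow (hnonneg a b h0a hab hbT) hω h1p.le
              · exact Real.rpow_le_rpow (by linarith) (by linarith) he.le
              · exact Real.rpow_nonneg (by linarith) _
              · exact Real.rpow_nonneg hx2 _
      have htri : |fD t - fD s| ≤ |fD a - fD s| + |f b - f a| + |fD t - fD b| := by
        have : fD t - fD s = (fD a - fD s) + (f b - f a) + (fD t - fD b) := by
          rw [← hfa, ← hfb]; ring
        rw [this]
        exact (abs_add_le _ _).trans (add_le_add_left (abs_add_le _ _) _)
      have hsum : x1 ^ (1/p) + x2 ^ (1/p) + x3 ^ (1/p)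
          ≤ 3 ^ (1 - 1/p) * (x1 + x2 + x3) ^ (1/p) := pm3 hp hx1 hx2 hx3
      have hxx : x1 + x2 + x3 = A t - A s := by rw [hx1_def, hx2_def, hx3_def]; ring
      have hts : 0 ≤ (t - s) ^ (r - 1/p) := Real.rpow_nonneg (by linarith) _
      calc |fD t - fD s| ≤ |fD a - fD s| + |f b - f a| + |fD t - fD b| := htri
        _ ≤ (x1 ^ (1/p) + x2 ^ (1/p) + x3 ^ (1/p)) * (t - s) ^ (r - 1/p) := by
            rw [add_mul, add_mul]
            exact add_le_add (add_le_add hT1 hT2) hT3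
        _ ≤ 3 ^ (1 - 1/p) * (x1 + x2 + x3) ^ (1/p) * (t - s) ^ (r - 1/p) :=
            mul_le_mul_of_nonneg_right hsum hts
        _ = 3 ^ (1 - 1/p) * (A t - A s) ^ (1/p) * (t - s) ^ (r - 1/p) := by rw [hxx]
end
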